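/- arXiv:1802.01312 — 5 statements merged into one kernel-verified Lean document; each statement's English description precedes it below -/
import Mathlib

section
/- Let h : [0,∞) → ℝ be concave, monotone increasing, with h(0) = 0. Let A₁,…,Aₘ be n×n positive semidefinite matrices, c₁,…,cₘ > 0, and x₁,…,xₘ ∈ [0,1]. Suppose θ > 0 satisfies θ ≤ tr(Aₜ)/cₜ for all t. Then h(θ · Σₜ cₜ xₜ) ≤ Σᵢ h(λᵢ(Σₜ Aₜ xₜ)), where λᵢ(X) denote the eigenvalues of X. -/
/-- Subadditivity of a concave function `h` on `[0,∞)` with `h 0 = 0`. -/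
lemma concave_subadd (h : ℝ → ℝ) (hconc : ConcaveOn ℝ (Set.Ici (0 : ℝ)) h)
    (h0 : h 0 = 0) {a b : ℝ} (ha : 0 ≤ a) (hb : 0 ≤ b) :
    h (a + b) ≤ h a + h b := by
  rcases eq_or_lt_of_le (add_nonneg ha hb) with hs | hs
  · have ha0 : a = 0 := by linarith
    have hb0 : b = 0 := by linarith
    simp [ha0, hb0, h0]
  · set s := a + b with hsdef
    have hsum : a / s + b / s = 1 := by
      rw [← add_div, div_self hs.ne']
    have hsum' : b / s + a / s = 1 := by linarith
    have h1 := hconc.2 (Set.mem_Ici.2 hs.le) (Set.mem_Ici.2 (le_refl (0:ℝ)))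
      (div_nonneg ha hs.le) (div_nonneg hb hs.le) hsum
    have h2 := hconc.2 (Set.mem_Ici.2 hs.le) (Set.mem_Ici.2 (le_refl (0:ℝ)))
      (div_nonneg hb hs.le) (div_nonneg ha hs.le) hsum'
    simp only [smul_eq_mul, mul_zero, add_zero, h0, div_mul_cancel₀ _ hs.ne'] at h1 h2
    have key : a / s * h s + b / s * h s = h s := by rw [← add_mul, hsum, one_mul]
    have : h (a + b) = h s := by rw [← hsdef]
    linarith [add_le_add h1 h2]

lemma concave_sum_le {ι : Type*} (h : ℝ → ℝ)
    (hconc : ConcaveOn ℝ (Set.Ici (0 : ℝ)) h) (h0 : h 0 = 0)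
    (s : Finset ι) (f : ι → ℝ) (hf : ∀ i ∈ s, 0 ≤ f i) :
    h (∑ i ∈ s, f i) ≤ ∑ i ∈ s, h (f i) := by
  induction s using Finset.cons_induction with
  | empty => simp [h0]
  | cons a s ha ih =>
    rw [Finset.sum_cons, Finset.sum_cons]
    refine (concave_subadd h hconc h0 (hf a (Finset.mem_cons_self a s))
      (Finset.sum_nonneg fun i hi => hf i (Finset.mem_cons_of_mem hi))).trans ?_
    exact add_le_add le_rfl (ih fun i hi => hf i (Finset.mem_cons_of_mem hi))

lemma posSemidef_smul_real {k : ℕ} {A : Matrix (Fin k) (Fin k) ℝ} (hA : A.PosSemidef)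
    {r : ℝ} (hr : 0 ≤ r) : (r • A).PosSemidef := by
  constructor
  · unfold Matrix.IsHermitian
    rw [Matrix.conjTranspose_smul, hA.1.eq]
    simp
  · intro v
    exact (hA.smul hr).2 v

open Matrix in
lemma sum_eigenvalues_eq_trace_real {k : ℕ} {A : Matrix (Fin k) (Fin k) ℝ}
    (hA : A.IsHermitian) : ∑ i, hA.eigenvalues i = A.trace := by
  have := congrArg Matrix.trace hA.spectral_theorem
  rw [Unitary.conjStarAlgAut_apply, Matrix.trace_mul_comm, ← mul_assoc,
    (Matrix.mem_unitaryGroup_iff').mp hA.eigenvectorUnitary.2, one_mul,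
    Matrix.trace_diagonal] at this
  simpa using this.symm

open Matrix in
/-- Lower bound `h(θ·Σ cₜxₜ) ≤ Σᵢ h(λᵢ(Σₜ Aₜxₜ))` for concave monotone `h` with `h 0 = 0`. -/
theorem h_theta_le_trace_function {n m : ℕ} (h : ℝ → ℝ)
    (hconc : ConcaveOn ℝ (Set.Ici (0 : ℝ)) h)
    (hmono : MonotoneOn h (Set.Ici (0 : ℝ)))
    (h0 : h 0 = 0)
    (A : Fin m → Matrix (Fin n) (Fin n) ℝ) (hA : ∀ t, (A t).PosSemidef)
    (c : Fin m → ℝ) (hc : ∀ t, 0 < c t)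
    (x : Fin m → ℝ) (hx : ∀ t, x t ∈ Set.Icc (0 : ℝ) 1)
    (θ : ℝ) (hθ : 0 < θ) (hθle : ∀ t, θ ≤ (A t).trace / c t)
    (hU : (∑ t, x t • A t).IsHermitian) :
    h (θ * ∑ t, c t * x t) ≤ ∑ i, h (hU.eigenvalues i) := by
  have hpsd : (∑ t, x t • A t).PosSemidef := by
    classical
    refine Finset.sum_induction _ _ (fun a b pa pb => pa.add pb) Matrix.PosSemidef.zero ?_
    exact fun t _ => posSemidef_smul_real (hA t) (hx t).1
  have hev : ∀ i, 0 ≤ hU.eigenvalues i := fun i => hpsd.eigenvalues_nonneg i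
  have htr : ∑ i, hU.eigenvalues i = (∑ t, x t • A t).trace :=
    sum_eigenvalues_eq_trace_real hU
  have harg : 0 ≤ θ * ∑ t, c t * x t :=
    mul_nonneg hθ.le (Finset.sum_nonneg fun t _ =>
      mul_nonneg (hc t).le (hx t).1)
  have hle : θ * ∑ t, c t * x t ≤ ∑ i, hU.eigenvalues i := by
    rw [htr, Matrix.trace_sum, Finset.mul_sum]
    apply Finset.sum_le_sum
    intro t _
    rw [Matrix.trace_smul, smul_eq_mul]
    have h1 : θ * c t ≤ (A t).trace := by
      have := (le_div_iff₀ (hc t)).mp (hθle t)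
      linarith
    calc θ * (c t * x t) = (θ * c t) * x t := by ring
      _ ≤ (A t).trace * x t := mul_le_mul_of_nonneg_right h1 (hx t).1
      _ = x t * (A t).trace := by ring
  calc h (θ * ∑ t, c t * x t) ≤ h (∑ i, hU.eigenvalues i) :=
        hmono harg (harg.trans hle) hle
    _ ≤ ∑ i, h (hU.eigenvalues i) :=
        concave_sum_le h hconc h0 _ _ fun i _ => hev i
end

section
/- Let h(u) = log(1+u), θ > 0, γ ≥ 1, b > 0, and define G_S'(u) = −(γ/(b(e−1))) ∫₀ᵘ exp((γ/b)(u−v)) θ/(1+θv) dv. Then for all u ≥ 0, G_S'(u) ≤ (1/(e−1)) · (1 − exp((γ/b)u)) / (θ⁻¹ + b/γ). Consequently, for any Θ > 0, the infimum b' of {u ≥ 0 : G_S'(u) ≤ −Θ} satisfies b' ≤ (b/γ) log((e−1)Θ(θ⁻¹ + b/γ) + 1). -/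
open Real intervalIntegral

lemma int_exp_mul (k u : ℝ) (hk : k ≠ 0) :
    ∫ v in (0:ℝ)..u, Real.exp (k * v) = (Real.exp (k * u) - 1) / k := by
  have h : ∀ x ∈ Set.uIcc (0:ℝ) u,
      HasDerivAt (fun v => Real.exp (k * v) / k) (Real.exp (k * x)) x := by
    intro x _
    have h1 : HasDerivAt (fun v : ℝ => k * v) k x := by
      simpa using (hasDerivAt_id x).const_mul k
    have h2 := h1.exp
    have h3 := h2.div_const k
    simpa [mul_div_assoc, div_self hk] using h3
  rw [intervalIntegral.integral_eq_sub_of_hasDerivAt h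
    ((Real.continuous_exp.comp (continuous_const.mul continuous_id)).intervalIntegrable 0 u)]
  rw [mul_zero, Real.exp_zero]
  ring

/-- For D-optimal design (`h(u) = log(1+u)`), an upper bound on `G_S'` and the resulting
bound on the budget `b'` consumed. -/
theorem GS_D_optimal_bound (γ b θ : ℝ) (hγ : 1 ≤ γ) (hb : 0 < b) (hθ : 0 < θ)
    (GS' : ℝ → ℝ)
    (hGS' : ∀ u : ℝ, GS' u =
      -(γ / (b * (Real.exp 1 - 1))) *
        ∫ v in (0 : ℝ)..u, Real.exp ((γ / b) * (u - v)) * (θ / (1 + θ * v))) :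
    (∀ u : ℝ, 0 ≤ u →
        GS' u ≤ (1 / (Real.exp 1 - 1)) * (1 - Real.exp ((γ / b) * u)) / (θ⁻¹ + b / γ)) ∧
    (∀ Θ : ℝ, 0 < Θ →
        sInf {u : ℝ | 0 ≤ u ∧ GS' u ≤ -Θ} ≤
          (b / γ) * Real.log ((Real.exp 1 - 1) * Θ * (θ⁻¹ + b / γ) + 1)) := by
  have hγ0 : 0 < γ := lt_of_lt_of_le one_pos hγ
  set c : ℝ := γ / b with hc_def
  have hc : 0 < c := div_pos hγ0 hb
  have hbγ' : b / γ = c⁻¹ := by rw [hc_def]; field_simp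
  have hE : (1:ℝ) < Real.exp 1 := by
    have := Real.add_one_le_exp 1; linarith
  have hE0 : 0 < Real.exp 1 - 1 := by linarith
  have hd : 0 < θ⁻¹ + b / γ := by positivity
  have hbγ : b / γ = c⁻¹ := hbγ'
  clear_value c
  have main : ∀ u : ℝ, 0 ≤ u →
      GS' u ≤ (1 / (Real.exp 1 - 1)) * (1 - Real.exp (c * u)) / (θ⁻¹ + b / γ) := by
    intro u hu
    have hsum : 0 < c + θ := by linarith
    have hk : -(c + θ) ≠ 0 := by nlinarith
    have hint_lower :
        ∫ v in (0:ℝ)..u, θ * Real.exp (c * u) * Real.exp (-(c + θ) * v)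
          = θ * Real.exp (c * u) * ((Real.exp (-(c + θ) * u) - 1) / (-(c + θ))) := by
      rw [intervalIntegral.integral_const_mul, int_exp_mul _ _ hk]
    have hcont : ContinuousOn (fun v => Real.exp (c * (u - v)) * (θ / (1 + θ * v)))
        (Set.uIcc 0 u) := by
      apply ContinuousOn.mul
      · exact (Real.continuous_exp.comp
          (continuous_const.mul (continuous_const.sub continuous_id))).continuousOn
      · apply ContinuousOn.div continuousOn_const
          (continuous_const.add (continuous_const.mul continuous_id)).continuousOn
        intro x hx
        rw [Set.uIcc_of_le hu] at hx
        have : 0 ≤ x := hx.1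
        show 1 + θ * x ≠ 0
        nlinarith
    have hI1 : IntervalIntegrable (fun v => Real.exp (c * (u - v)) * (θ / (1 + θ * v)))
        MeasureTheory.volume 0 u := hcont.intervalIntegrable
    have hI2 : IntervalIntegrable (fun v => θ * Real.exp (c * u) * Real.exp (-(c + θ) * v))
        MeasureTheory.volume 0 u :=
      ((continuous_const.mul
        (Real.continuous_exp.comp (continuous_const.mul continuous_id))).intervalIntegrable 0 u)
    have hmono : ∫ v in (0:ℝ)..u, θ * Real.exp (c * u) * Real.exp (-(c + θ) * v)
        ≤ ∫ v in (0:ℝ)..u, Real.exp (c * (u - v)) * (θ / (1 + θ * v)) := by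
      apply intervalIntegral.integral_mono_on hu hI2 hI1
      intro x hx
      have hx0 : 0 ≤ x := hx.1
      have h1 : 0 < 1 + θ * x := by nlinarith
      have hle : Real.exp (-(θ * x)) ≤ 1 / (1 + θ * x) := by
        rw [Real.exp_neg, one_div]
        exact inv_anti₀ h1 (by linarith [Real.add_one_le_exp (θ * x)])
      have key : θ * Real.exp (-(c+θ) * x) ≤ Real.exp (-(c * x)) * (θ / (1 + θ * x)) := by
        have hsplit : Real.exp (-(c+θ)*x) = Real.exp (-(c*x)) * Real.exp (-(θ*x)) := by
          rw [← Real.exp_add]; ring_nf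
        rw [hsplit]
        have h2 := mul_le_mul_of_nonneg_left hle (le_of_lt (Real.exp_pos (-(c*x))))
        calc θ * (Real.exp (-(c*x)) * Real.exp (-(θ*x)))
            ≤ θ * (Real.exp (-(c*x)) * (1 / (1 + θ*x))) := by
              exact mul_le_mul_of_nonneg_left h2 hθ.le
          _ = Real.exp (-(c*x)) * (θ / (1 + θ*x)) := by ring
      calc θ * Real.exp (c*u) * Real.exp (-(c+θ)*x)
          = Real.exp (c*u) * (θ * Real.exp (-(c+θ)*x)) := by ring
        _ ≤ Real.exp (c*u) * (Real.exp (-(c*x)) * (θ / (1+θ*x))) :=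
            mul_le_mul_of_nonneg_left key (Real.exp_pos _).le
        _ = (Real.exp (c*u) * Real.exp (-(c*x))) * (θ / (1+θ*x)) := by ring
        _ = Real.exp (c*(u-x)) * (θ / (1+θ*x)) := by rw [← Real.exp_add]; ring_nf
    rw [hGS' u]
    have hcoef : -(γ / (b * (Real.exp 1 - 1))) = -(c / (Real.exp 1 - 1)) := by
      rw [hc_def]; field_simp
    rw [hcoef]
    have hcoef_nonpos : -(c / (Real.exp 1 - 1)) ≤ 0 := neg_nonpos.mpr (by positivity)
    have step1 : -(c / (Real.exp 1 - 1)) *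
        (∫ v in (0:ℝ)..u, Real.exp (c * (u - v)) * (θ / (1 + θ * v)))
        ≤ -(c / (Real.exp 1 - 1)) *
        (∫ v in (0:ℝ)..u, θ * Real.exp (c * u) * Real.exp (-(c + θ) * v)) :=
      mul_le_mul_of_nonpos_left hmono hcoef_nonpos
    refine le_trans step1 ?_
    rw [hint_lower, hbγ]
    set A := Real.exp (c * u) with hA_def
    set B := Real.exp (-(θ * u)) with hB_def
    have hA : 0 < A := Real.exp_pos _
    have hB0 : 0 < B := Real.exp_pos _
    have hB1 : B ≤ 1 := by rw [hB_def, Real.exp_le_one_iff]; nlinarith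
    have heq : Real.exp (-(c+θ)*u) = A⁻¹ * B := by
      rw [hA_def, hB_def, ← Real.exp_neg, ← Real.exp_add]; ring_nf
    rw [heq]
    have hA' : A ≠ 0 := ne_of_gt hA
    have hsum' : c + θ ≠ 0 := ne_of_gt hsum
    have hE' : Real.exp 1 - 1 ≠ 0 := ne_of_gt hE0
    have key1 : -(c / (Real.exp 1 - 1)) * (θ * A * ((A⁻¹ * B - 1) / (-(c+θ))))
        = (c * θ / ((Real.exp 1 - 1) * (c+θ))) * (B - A) := by
      rw [div_neg]
      field_simp
    have key2 : (1 / (Real.exp 1 - 1)) * (1 - A) / (θ⁻¹ + c⁻¹)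
        = (c * θ / ((Real.exp 1 - 1) * (c+θ))) * (1 - A) := by
      field_simp
    rw [key1, key2]
    have hcoef2 : 0 ≤ c * θ / ((Real.exp 1 - 1) * (c+θ)) := by positivity
    exact mul_le_mul_of_nonneg_left (by linarith) hcoef2
  constructor
  · exact main
  · intro Θ hΘ
    set X := (Real.exp 1 - 1) * Θ * (θ⁻¹ + b / γ) + 1 with hX_def
    have hX1 : 1 ≤ X := by
      have := mul_pos (mul_pos hE0 hΘ) hd
      rw [hX_def]; linarith
    have hX0 : 0 < X := by linarith
    set u₀ := (b / γ) * Real.log X with hu₀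
    have hu₀0 : 0 ≤ u₀ := mul_nonneg (by positivity) (Real.log_nonneg hX1)
    have hcu : c * u₀ = Real.log X := by
      rw [hu₀, hbγ, ← mul_assoc, mul_inv_cancel₀ (ne_of_gt hc), one_mul]
    have hmem : u₀ ∈ {u : ℝ | 0 ≤ u ∧ GS' u ≤ -Θ} := by
      refine ⟨hu₀0, ?_⟩
      have hm := main u₀ hu₀0
      rw [hcu, Real.exp_log hX0] at hm
      have heq2 : (1 / (Real.exp 1 - 1)) * (1 - X) / (θ⁻¹ + b / γ) = -Θ := by
        rw [hX_def]
        field_simp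
        ring
      exact le_of_le_of_eq hm heq2
    exact csInf_le ⟨0, fun x hx => hx.1⟩ hmem
end

section
/- Let h(u) = 1 − 1/(1+u), θ > 0, γ ≥ 1, b > 0, and define G_S'(u) = −(γ/(b(e−1))) ∫₀ᵘ exp((γ/b)(u−v)) θ/(1+θv)² dv. Then for all u ≥ 0, G_S'(u) ≤ (1/(e−1)) · (1 − exp((γ/b)u)) / (θ⁻¹ + 2b/γ). -/
lemma exp_int (k u : ℝ) (hk : 0 < k) :
    ∫ v in (0:ℝ)..u, Real.exp (-(k*v)) = (1 - Real.exp (-(k*u)))/k := by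
  have h : ∀ v ∈ Set.uIcc (0:ℝ) u, HasDerivAt (fun v => -(Real.exp (-(k*v)))/k)
      (Real.exp (-(k*v))) v := by
    intro v _
    have h1 : HasDerivAt (fun v : ℝ => -(k*v)) (-k) v := by
      simpa using ((hasDerivAt_id v).const_mul (-k))
    have h2 := (Real.hasDerivAt_exp (-(k*v))).comp v h1
    have h3 := h2.neg.div_const k
    convert h3 using 1
    · rfl
    · rfl
    · rfl
    · rw [eq_div_iff hk.ne']; ring
  rw [intervalIntegral.integral_eq_sub_of_hasDerivAt h
    ((Real.continuous_exp.comp (by continuity)).intervalIntegrable 0 u)]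
  field_simp
  rw [mul_zero, neg_zero, Real.exp_zero]; ring

/-- For A-optimal design (`h(u) = 1 − 1/(1+u)`, so `h'(u) = 1/(1+u)²`), an upper bound
on the smoothed budget derivative `G_S'`. -/
theorem GS_A_optimal_bound (γ b θ : ℝ) (hγ : 1 ≤ γ) (hb : 0 < b) (hθ : 0 < θ)
    (GS' : ℝ → ℝ)
    (hGS' : ∀ u : ℝ, GS' u =
      -(γ / (b * (Real.exp 1 - 1))) *
        ∫ v in (0 : ℝ)..u, Real.exp ((γ / b) * (u - v)) * (θ / (1 + θ * v) ^ 2)) :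
    ∀ u : ℝ, 0 ≤ u →
      GS' u ≤ (1 / (Real.exp 1 - 1)) * (1 - Real.exp ((γ / b) * u)) / (θ⁻¹ + 2 * b / γ) := by
  intro u hu
  rw [hGS' u]
  have hγ0 : (0:ℝ) < γ := lt_of_lt_of_le one_pos hγ
  set c := γ / b with hcdef
  have hc : 0 < c := div_pos hγ0 hb
  have he : 0 < Real.exp 1 - 1 := by
    have := Real.exp_one_gt_d9; linarith
  set k := c + 2*θ with hkdef
  have hk : 0 < k := by positivity
  have key : θ * (Real.exp (c*u) - 1) / k ≤
      ∫ v in (0:ℝ)..u, Real.exp (c * (u - v)) * (θ / (1 + θ * v) ^ 2) := by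
    have step1 : ∫ v in (0:ℝ)..u, (θ * Real.exp (c*u)) * Real.exp (-(k*v)) ≤
        ∫ v in (0:ℝ)..u, Real.exp (c * (u - v)) * (θ / (1 + θ * v) ^ 2) := by
      apply intervalIntegral.integral_mono_on hu
      · exact Continuous.intervalIntegrable (by continuity) 0 u
      · apply ContinuousOn.intervalIntegrable
        rw [Set.uIcc_of_le hu]
        apply ContinuousOn.mul
        · exact (Real.continuous_exp.comp (by continuity)).continuousOn
        · apply ContinuousOn.div continuousOn_const
          · exact Continuous.continuousOn (by continuity)
          · intro v hv
            have : 0 ≤ v := hv.1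
            positivity
      · intro v hv
        have hv0 : 0 ≤ v := hv.1
        have hpos : (0:ℝ) < 1 + θ * v := by positivity
        have h1 : 1 + θ * v ≤ Real.exp (θ * v) := by
          have := Real.add_one_le_exp (θ * v); linarith
        have h2 : (1 + θ * v)^2 ≤ Real.exp (2 * θ * v) := by
          have : (1 + θ * v)^2 ≤ (Real.exp (θ * v))^2 :=
            pow_le_pow_left₀ (le_of_lt hpos) h1 2
          calc (1 + θ * v)^2 ≤ (Real.exp (θ * v))^2 := this
            _ = Real.exp (2 * θ * v) := by
              rw [← Real.exp_nat_mul]; ring_nf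
        have h3 : Real.exp (-(2 * θ * v)) ≤ 1 / (1 + θ * v)^2 := by
          rw [Real.exp_neg]
          rw [one_div]
          exact inv_anti₀ (by positivity) h2
        have heq : (θ * Real.exp (c*u)) * Real.exp (-(k*v))
            = Real.exp (c * (u - v)) * (θ * Real.exp (-(2 * θ * v))) := by
          have hx : c*u + -(k*v) = c*(u-v) + -(2*θ*v) := by rw [hkdef]; ring
          calc (θ * Real.exp (c*u)) * Real.exp (-(k*v))
              = θ * Real.exp (c*u + -(k*v)) := by rw [Real.exp_add]; ring
            _ = θ * Real.exp (c*(u-v) + -(2*θ*v)) := by rw [hx]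
            _ = Real.exp (c * (u - v)) * (θ * Real.exp (-(2 * θ * v))) := by
                rw [Real.exp_add]; ring
        rw [heq]
        apply mul_le_mul_of_nonneg_left _ (Real.exp_nonneg _)
        calc θ * Real.exp (-(2 * θ * v)) ≤ θ * (1 / (1 + θ * v)^2) :=
              mul_le_mul_of_nonneg_left h3 (le_of_lt hθ)
          _ = θ / (1 + θ * v)^2 := by ring
    have step2 : ∫ v in (0:ℝ)..u, (θ * Real.exp (c*u)) * Real.exp (-(k*v))
        = (θ * Real.exp (c*u)) * ((1 - Real.exp (-(k*u)))/k) := by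
      rw [intervalIntegral.integral_const_mul, exp_int k u hk]
    have step3 : θ * (Real.exp (c*u) - 1) / k
        ≤ (θ * Real.exp (c*u)) * ((1 - Real.exp (-(k*u)))/k) := by
      have hE : Real.exp (c*u) * (1 - Real.exp (-(k*u)))
          = Real.exp (c*u) - Real.exp (-(2*θ*u)) := by
        rw [mul_sub, mul_one, ← Real.exp_add,
          show c*u + -(k*u) = -(2*θ*u) by rw [hkdef]; ring]
      have h4 : Real.exp (-(2*θ*u)) ≤ 1 := by
        have : Real.exp (-(2*θ*u)) ≤ Real.exp 0 := Real.exp_le_exp.mpr (by nlinarith)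
        simpa using this
      rw [← mul_div_assoc]
      apply div_le_div_of_nonneg_right ?_ hk.le
      nlinarith [Real.exp_pos (c*u)]
    linarith [step1, step2.symm ▸ step3]
  -- now conclude
  have hcoef : (0:ℝ) ≤ γ / (b * (Real.exp 1 - 1)) := by positivity
  have main : -(γ / (b * (Real.exp 1 - 1))) *
        (∫ v in (0:ℝ)..u, Real.exp (c * (u - v)) * (θ / (1 + θ * v) ^ 2))
      ≤ -(γ / (b * (Real.exp 1 - 1))) * (θ * (Real.exp (c*u) - 1) / k) := by
    have := mul_le_mul_of_nonpos_left key (neg_nonpos.mpr hcoef)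
    linarith [this]
  refine le_trans main (le_of_eq ?_)
  rw [hkdef, hcdef]
  have h1 : θ⁻¹ + 2 * b / γ = (γ + 2*b*θ)/(θ*γ) := by
    field_simp
  rw [h1]
  field_simp
  ring
end

section
/- The map X ↦ (I+X)⁻² on positive semidefinite matrices is NOT order-reversing in general: there exist 2×2 PSD matrices U ⪰ U' ⪰ 0 such that (I+U)⁻² ⪯̸ (I+U')⁻². Equivalently, the gradient of the A-optimal objective H(X) = −tr((I+X)⁻¹) fails the PSD diminishing returns property. -/
open Matrix in
lemma inv1 : (1 + !![17,9;9,9] : Matrix (Fin 2) (Fin 2) ℝ)⁻¹ = !![10/99,-9/99;-9/99,18/99] := by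
  apply Matrix.inv_eq_right_inv
  have : (1 + !![17,9;9,9] : Matrix (Fin 2) (Fin 2) ℝ) = !![18,9;9,10] := by
    ext i j; fin_cases i <;> fin_cases j <;> simp [Matrix.one_apply] <;> norm_num
  rw [this]
  ext i j; fin_cases i <;> fin_cases j <;>
    simp [Matrix.mul_apply, Fin.sum_univ_two, Matrix.one_apply] <;> norm_num

open Matrix in
lemma inv2 : (1 + !![8,0;0,0] : Matrix (Fin 2) (Fin 2) ℝ)⁻¹ = !![1/9,0;0,1] := by
  apply Matrix.inv_eq_right_inv
  have : (1 + !![8,0;0,0] : Matrix (Fin 2) (Fin 2) ℝ) = !![9,0;0,1] := by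
    ext i j; fin_cases i <;> fin_cases j <;> simp [Matrix.one_apply] <;> norm_num
  rw [this]
  ext i j; fin_cases i <;> fin_cases j <;>
    simp [Matrix.mul_apply, Fin.sum_univ_two, Matrix.one_apply] <;> norm_num

open Matrix in
/-- The map `X ↦ (I+X)⁻²` is NOT order-reversing on PSD matrices: there are `2×2` PSD
matrices `U ⪰ U' ⪰ 0` with `(I+U)⁻² ⪯̸ (I+U')⁻²`; i.e., the gradient of the A-optimal
objective fails the PSD diminishing returns property. -/
theorem inv_sq_not_antitone :
    ∃ U U' : Matrix (Fin 2) (Fin 2) ℝ, U'.PosSemidef ∧ (U - U').PosSemidef ∧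
      ¬ (((1 + U')⁻¹) ^ 2 - ((1 + U)⁻¹) ^ 2).PosSemidef := by
  refine ⟨!![17,9;9,9], !![8,0;0,0], ⟨?_, ?_⟩, ⟨?_, ?_⟩, ?_⟩
  · ext i j; fin_cases i <;> fin_cases j <;> simp [Matrix.conjTranspose, Matrix.vecHead, Matrix.vecTail]
  · intro x
    simp [Finsupp.sum_fintype, dotProduct, Matrix.mulVec, Fin.sum_univ_two]
    nlinarith [sq_nonneg (x 0)]
  · ext i j; fin_cases i <;> fin_cases j <;> simp [Matrix.conjTranspose, Matrix.vecHead, Matrix.vecTail]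
  · intro x
    simp [Finsupp.sum_fintype, dotProduct, Matrix.mulVec, Fin.sum_univ_two]
    nlinarith [sq_nonneg (x 0 + x 1)]
  · intro h
    have := (Matrix.posSemidef_iff_dotProduct_mulVec.mp h).2 ![1, 0]
    rw [inv1, inv2] at this
    simp [pow_two, Matrix.mul_apply, dotProduct, Matrix.mulVec,
      Fin.sum_univ_two, Matrix.sub_apply] at this
    norm_num at this
end

section
/- Let H_S and G_S be concave differentiable functions (H_S a trace function on symmetric matrices, G_S on ℝ) with H_S(0) = 0 and G_S(0) = 0. Let A₁,…,Aₘ be PSD matrices, c₁,…,cₘ > 0, and suppose x₁,…,xₘ ∈ [0,1] satisfy xₜ(cₜ G_S'(Σ_{s≤t} cₛxₛ) + ⟨Aₜ, ∇H_S(Σ_{s≤t} Aₛxₛ)⟩) ≥ 0 for every t. Then H_S(Σₜ Aₜxₜ) + G_S(Σₜ cₜxₜ) ≥ 0. -/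
open Matrix in
/-- Tangent line inequality for concave functions on ℝ. -/
lemma tangent_le_aux {g : ℝ → ℝ} (hg : ConcaveOn ℝ Set.univ g) {a b g'a : ℝ}
    (hd : HasDerivAt g g'a a) : g b ≤ g a + g'a * (b - a) := by
  rcases lt_trichotomy a b with h | h | h
  · have := hg.slope_le_of_hasDerivAt (Set.mem_univ a) (Set.mem_univ b) h hd
    rw [slope_def_field, div_le_iff₀ (by linarith)] at this
    linarith
  · subst h; simp
  · have := hg.le_slope_of_hasDerivAt (Set.mem_univ b) (Set.mem_univ a) h hd
    rw [slope_def_field, le_div_iff₀ (by linarith)] at this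
    linarith

open Matrix in
lemma trace_ddw_aux {n : ℕ} [DecidableEq (Fin n)] (W : Matrix (Fin n) (Fin n) ℝ)
    (d e : Fin n → ℝ) :
    (diagonal e * (star W * (diagonal d * W))).trace
      = ∑ j, ∑ i, (W i j)^2 * (e j * d i) := by
  simp [Matrix.trace, Matrix.diag, Matrix.mul_apply, Matrix.diagonal_apply,
    Finset.mul_sum, Matrix.star_apply]
  congr 1; ext j; congr 1; ext i; ring

open Matrix in
lemma trace_sandwich_aux {n : ℕ} [DecidableEq (Fin n)] (u v : Matrix (Fin n) (Fin n) ℝ)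
    (d e : Fin n → ℝ) :
    ((v * diagonal e * star v) * (u * diagonal d * star u)).trace
      = ∑ j, ∑ i, ((star u * v) i j)^2 * (e j * d i) := by
  have h1 : (v * diagonal e * star v) * (u * diagonal d * star u)
      = v * (diagonal e * (star v * (u * (diagonal d * star u)))) := by
    simp [mul_assoc]
  rw [h1, Matrix.trace_mul_comm, ← trace_ddw_aux (star u * v) d e]
  congr 1
  simp [StarMul.star_mul, mul_assoc]

open Matrix in
/-- Klein's inequality for real symmetric matrices. -/
lemma klein_aux {n : ℕ} [DecidableEq (Fin n)] (f f' : ℝ → ℝ)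
    (htang : ∀ a b : ℝ, f b ≤ f a + f' a * (b - a))
    {U V : Matrix (Fin n) (Fin n) ℝ} (hU : U.IsHermitian) (hV : V.IsHermitian) :
    (∑ i, f (hV.eigenvalues i)) + ((U - V) * hU.cfc f').trace ≤ ∑ i, f (hU.eigenvalues i) := by
  set u := (IsHermitian.eigenvectorUnitary hU : Matrix (Fin n) (Fin n) ℝ) with hu
  set v := (IsHermitian.eigenvectorUnitary hV : Matrix (Fin n) (Fin n) ℝ) with hv
  set lam := hU.eigenvalues with hlam
  set mu := hV.eigenvalues with hmu
  have huu : u * star u = 1 := mem_unitaryGroup_iff.mp (IsHermitian.eigenvectorUnitary hU).2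
  have huu' : star u * u = 1 := mem_unitaryGroup_iff'.mp (IsHermitian.eigenvectorUnitary hU).2
  have hvv : v * star v = 1 := mem_unitaryGroup_iff.mp (IsHermitian.eigenvectorUnitary hV).2
  have hvv' : star v * v = 1 := mem_unitaryGroup_iff'.mp (IsHermitian.eigenvectorUnitary hV).2
  set W := star u * v with hWdef
  have hWW : W * star W = 1 := by
    have h : W * star W = star u * (v * star v) * u := by
      simp [hWdef, StarMul.star_mul, star_star, mul_assoc]
    rw [h, hvv, mul_one, huu']
  have hW'W : star W * W = 1 := by
    have h : star W * W = star v * (u * star u) * v := by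
      simp [hWdef, StarMul.star_mul, star_star, mul_assoc]
    rw [h, huu, mul_one, hvv']
  have hrow : ∀ i, ∑ j, (W i j)^2 = 1 := by
    intro i
    have h : (W * star W) i i = (1 : Matrix (Fin n) (Fin n) ℝ) i i := by rw [hWW]
    simpa [Matrix.mul_apply, Matrix.star_apply, Matrix.one_apply, sq] using h
  have hcol : ∀ j, ∑ i, (W i j)^2 = 1 := by
    intro j
    have h : (star W * W) j j = (1 : Matrix (Fin n) (Fin n) ℝ) j j := by rw [hW'W]
    simpa [Matrix.mul_apply, Matrix.star_apply, Matrix.one_apply, sq, mul_comm] using h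
  have hcfc : hU.cfc f' = u * diagonal (fun i => f' (lam i)) * star u := rfl
  have hUs : U = u * diagonal lam * star u := hU.spectral_theorem
  have hVs : V = v * diagonal mu * star v := hV.spectral_theorem
  have trV : (V * hU.cfc f').trace = ∑ j, ∑ i, (W i j)^2 * (mu j * f' (lam i)) := by
    conv_lhs => rw [hVs, hcfc]
    exact trace_sandwich_aux u v (fun i => f' (lam i)) mu
  have trU : (U * hU.cfc f').trace = ∑ k, lam k * f' (lam k) := by
    have h := trace_sandwich_aux u u (fun i => f' (lam i)) lam
    rw [← hUs, ← hcfc] at h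
    rw [h, huu']
    simp [Matrix.one_apply, ite_pow, Finset.sum_ite_eq]
  have expand1 : ∑ i, f (lam i) = ∑ j, ∑ i, (W i j)^2 * f (lam i) := by
    rw [Finset.sum_comm]
    refine Finset.sum_congr rfl fun i _ => ?_
    rw [← Finset.sum_mul, hrow i, one_mul]
  have expand2 : ∑ j, f (mu j) = ∑ j, ∑ i, (W i j)^2 * f (mu j) := by
    refine Finset.sum_congr rfl fun j _ => ?_
    rw [← Finset.sum_mul, hcol j, one_mul]
  have expand3 : ∑ k, lam k * f' (lam k) = ∑ j, ∑ i, (W i j)^2 * (lam i * f' (lam i)) := by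
    rw [Finset.sum_comm]
    refine Finset.sum_congr rfl fun i _ => ?_
    rw [← Finset.sum_mul, hrow i, one_mul]
  rw [sub_mul, trace_sub, trU, trV, expand1, expand2, expand3,
    ← Finset.sum_sub_distrib, ← Finset.sum_add_distrib]
  refine Finset.sum_le_sum fun j _ => ?_
  rw [← Finset.sum_sub_distrib, ← Finset.sum_add_distrib]
  refine Finset.sum_le_sum fun i _ => ?_
  nlinarith [htang (lam i) (mu j), sq_nonneg (W i j)]

set_option maxHeartbeats 1000000 in
open Matrix in
/-- If each primal step satisfies `xₜ(cₜ G_S'(Σ_{s≤t} cₛxₛ) + ⟨Aₜ, ∇H_S(Σ_{s≤t} xₛ•Aₛ)⟩) ≥ 0`,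
then the final objective value `H_S(Σₜ xₜ•Aₜ) + G_S(Σₜ cₜxₜ)` is nonnegative, where `H_S`
is the trace function of the concave differentiable `h_S`, and `∇H_S` acts spectrally by
applying `h_S'` to the eigenvalues. -/
theorem telescoping_nonneg {n m : ℕ} [DecidableEq (Fin n)]
    (hS hS' : ℝ → ℝ) (hSconc : ConcaveOn ℝ Set.univ hS)
    (hSderiv : ∀ u : ℝ, HasDerivAt hS (hS' u) u) (hS0 : hS 0 = 0)
    (GS : ℝ → ℝ) (hGconc : ConcaveOn ℝ Set.univ GS)
    (hGdiff : Differentiable ℝ GS) (hG0 : GS 0 = 0)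
    (A : Fin m → Matrix (Fin n) (Fin n) ℝ) (hA : ∀ t, (A t).PosSemidef)
    (c : Fin m → ℝ) (hc : ∀ t, 0 < c t)
    (x : Fin m → ℝ) (hx : ∀ t, x t ∈ Set.Icc (0 : ℝ) 1)
    (hsum : ∀ t : Fin m, (∑ s ∈ Finset.Iic t, x s • A s).PosSemidef)
    (hTot : (∑ t, x t • A t).PosSemidef)
    (hrule : ∀ t : Fin m,
      0 ≤ x t * (c t * deriv GS (∑ s ∈ Finset.Iic t, c s * x s) +
        (A t * ((hsum t).isHermitian.cfc hS')).trace)) :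
    0 ≤ (∑ i, hS (hTot.isHermitian.eigenvalues i)) + GS (∑ t, c t * x t) := by
  classical
  have htang : ∀ a b : ℝ, hS b ≤ hS a + hS' a * (b - a) :=
    fun a b => tangent_le_aux hSconc (hSderiv a)
  have klein : ∀ {U V : Matrix (Fin n) (Fin n) ℝ} (hU : U.IsHermitian) (hV : V.IsHermitian),
      (∑ i, hS (hV.eigenvalues i)) + ((U - V) * hU.cfc hS').trace
        ≤ ∑ i, hS (hU.eigenvalues i) :=
    fun hU hV => klein_aux hS hS' htang hU hV
  set F : Matrix (Fin n) (Fin n) ℝ → ℝ :=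
    fun M => if h : M.IsHermitian then ∑ i, hS (h.eigenvalues i) else 0 with hF
  have hFval : ∀ (M : Matrix (Fin n) (Fin n) ℝ) (h : M.IsHermitian),
      F M = ∑ i, hS (h.eigenvalues i) := fun M h => dif_pos h
  have hherm : ∀ (s : Finset (Fin m)), (∑ t ∈ s, x t • A t).IsHermitian := by
    intro s
    show _ = _
    rw [conjTranspose_sum]
    exact Finset.sum_congr rfl fun t _ => by
      rw [conjTranspose_smul, (hA t).isHermitian.eq, star_trivial]
  have hF0 : F 0 = 0 := by
    rw [hFval 0 isHermitian_zero]
    have h0 : ∀ i, (isHermitian_zero (α := ℝ) (n := Fin n)).eigenvalues i = 0 := by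
      intro i
      rw [Matrix.IsHermitian.eigenvalues_eq]
      simp
    simp [h0, hS0]
  have key : ∀ k : ℕ, k ≤ m →
      0 ≤ F (∑ s ∈ Finset.univ.filter (fun s : Fin m => (s : ℕ) < k), x s • A s)
        + GS (∑ s ∈ Finset.univ.filter (fun s : Fin m => (s : ℕ) < k), c s * x s) := by
    intro k
    induction k with
    | zero =>
      intro _
      have : Finset.univ.filter (fun s : Fin m => (s : ℕ) < 0) = ∅ := by
        ext s; simp
      simp [this, hF0, hG0]
    | succ k ih =>
      intro hk1
      have hk : k < m := hk1
      have ihk := ih (le_of_lt hk)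
      set t : Fin m := ⟨k, hk⟩ with ht
      have hIic : Finset.univ.filter (fun s : Fin m => (s:ℕ) < k+1) = Finset.Iic t := by
        ext s; simp only [Finset.mem_filter, Finset.mem_univ, true_and, Finset.mem_Iic, Fin.le_def, ht, Fin.val_mk]; omega
      have hIio : Finset.univ.filter (fun s : Fin m => (s:ℕ) < k) = Finset.Iio t := by
        ext s; simp only [Finset.mem_filter, Finset.mem_univ, true_and, Finset.mem_Iio, Fin.lt_def, ht, Fin.val_mk]
      rw [hIio] at ihk
      rw [hIic]
      have hsplitM : ∑ s ∈ Finset.Iic t, x s • A s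
          = x t • A t + ∑ s ∈ Finset.Iio t, x s • A s := by
        rw [← Finset.Iio_insert, Finset.sum_insert (by simp)]
      have hsplitR : ∑ s ∈ Finset.Iic t, c s * x s
          = c t * x t + ∑ s ∈ Finset.Iio t, c s * x s := by
        rw [← Finset.Iio_insert, Finset.sum_insert (by simp)]
      have hUp : (∑ s ∈ Finset.Iio t, x s • A s).IsHermitian := by
        have := hherm (Finset.Iio t); exact this
      have hK := klein (U := ∑ s ∈ Finset.Iic t, x s • A s)
        (V := ∑ s ∈ Finset.Iio t, x s • A s) (hsum t).isHermitian hUp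
      have hdiff : (∑ s ∈ Finset.Iic t, x s • A s) - (∑ s ∈ Finset.Iio t, x s • A s)
          = x t • A t := by
        rw [hsplitM, add_sub_cancel_right]
      rw [hdiff, smul_mul_assoc, trace_smul, smul_eq_mul] at hK
      have hG : GS (∑ s ∈ Finset.Iio t, c s * x s)
          ≤ GS (∑ s ∈ Finset.Iic t, c s * x s)
            + deriv GS (∑ s ∈ Finset.Iic t, c s * x s)
              * ((∑ s ∈ Finset.Iio t, c s * x s) - ∑ s ∈ Finset.Iic t, c s * x s) :=
        tangent_le_aux hGconc (hGdiff _).hasDerivAt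
      have hsub : (∑ s ∈ Finset.Iio t, c s * x s) - ∑ s ∈ Finset.Iic t, c s * x s
          = -(c t * x t) := by rw [hsplitR]; ring
      rw [hsub] at hG
      have hr := hrule t
      rw [hFval _ (hsum t).isHermitian]
      rw [hFval _ hUp] at ihk
      nlinarith [hK, hG, hr, ihk]
  have hfin := key m le_rfl
  have huniv : Finset.univ.filter (fun s : Fin m => (s : ℕ) < m) = Finset.univ := by
    ext s; simp [s.isLt]
  rw [huniv] at hfin
  rw [hFval _ hTot.isHermitian] at hfin
  exact hfin
end
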